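/- arXiv:0911.3719 — 3 statements merged into one kernel-verified Lean document; each statement's English description precedes it below -/
import Mathlib

section
/- Let C = kX be the coalgebra freely spanned by a set X of grouplike elements (Δ(x) = x ⊗ x, ε(x) = 1 for x ∈ X). Then the free commutative Hopf algebra S(t_C)_Θ generated by C is isomorphic as a Hopf algebra to the group algebra k[ℤ^(X)] of the free abelian group on X. -/
open TensorProduct

noncomputable section

variable (k : Type) [Field k]

/-- Convolution product of two linear maps from a coalgebra to an algebra. -/
def conv {C A : Type} [AddCommGroup C] [Module k C] [Coalgebra k C]
    [Ring A] [Algebra k A] (f g : C →ₗ[k] A) : C →ₗ[k] A :=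
  LinearMap.mul' k A ∘ₗ TensorProduct.map f g ∘ₗ Coalgebra.comul

/-- Unit of the convolution algebra: `unit ∘ counit`. -/
def convOne {C A : Type} [AddCommGroup C] [Module k C] [Coalgebra k C]
    [Ring A] [Algebra k A] : C →ₗ[k] A :=
  Algebra.linearMap k A ∘ₗ Coalgebra.counit

section CocycleDefs

variable {H : Type} [Ring H] [HopfAlgebra k H]

/-- The two-cocycle condition `β(x₁,y₁) β(x₂y₂,z) = β(y₁,z₁) β(x,y₂z₂)` for an `A`-valued
bilinear form `β` on `H`, as an equality of linear maps on `(H ⊗ H) ⊗ H`. -/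
def IsCocycle {A : Type} [CommRing A] [Algebra k A] (β : H ⊗[k] H →ₗ[k] A) : Prop :=
  conv k (LinearMap.mul' k A ∘ₗ TensorProduct.map β (convOne k))
      (β ∘ₗ TensorProduct.map (LinearMap.mul' k H) LinearMap.id)
  = conv k
      (LinearMap.mul' k A ∘ₗ TensorProduct.map (convOne k) β
        ∘ₗ (TensorProduct.assoc k H H H).toLinearMap)
      (β ∘ₗ TensorProduct.map LinearMap.id (LinearMap.mul' k H)
        ∘ₗ (TensorProduct.assoc k H H H).toLinearMap)

/-- `β` and `βinv` are mutually inverse for the convolution product. -/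
def IsConvInverse {A : Type} [CommRing A] [Algebra k A]
    (β βinv : H ⊗[k] H →ₗ[k] A) : Prop :=
  conv k β βinv = convOne k ∧ conv k βinv β = convOne k

end CocycleDefs

variable (C : Type) [AddCommGroup C] [Module k C] [Coalgebra k C]

/-- A model of Takeuchi's free commutative Hopf algebra `S(t_C)_Θ` generated by the
coalgebra `C`, together with its generators `t_x` and `t⁻¹_x`. -/
structure TakData (T : Type) [CommRing T] [HopfAlgebra k T] where
  t : C →ₗ[k] T
  tinv : C →ₗ[k] T
  comul_t : Coalgebra.comul ∘ₗ t = TensorProduct.map t t ∘ₗ Coalgebra.comul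
  counit_t : Coalgebra.counit ∘ₗ t = Coalgebra.counit
  comul_tinv : Coalgebra.comul ∘ₗ tinv
    = TensorProduct.map tinv tinv ∘ₗ (TensorProduct.comm k C C).toLinearMap ∘ₗ Coalgebra.comul
  counit_tinv : Coalgebra.counit ∘ₗ tinv = Coalgebra.counit
  conv_t_tinv : conv k t tinv = convOne k
  conv_tinv_t : conv k tinv t = convOne k
  antipode_t : HopfAlgebra.antipode (R := k) ∘ₗ t = tinv
  antipode_tinv : HopfAlgebra.antipode (R := k) ∘ₗ tinv = t
  adjoin_eq_top : Algebra.adjoin k (Set.range ⇑t ∪ Set.range ⇑tinv) = ⊤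

namespace TakData

variable {k C} {H : Type} [Ring H] [HopfAlgebra k H]
variable {T : Type} [CommRing T] [HopfAlgebra k T] (D : TakData k H T)

/-- `x ⊗ y ↦ t_x t_y`. -/
def tt : H ⊗[k] H →ₗ[k] T := LinearMap.mul' k T ∘ₗ TensorProduct.map D.t D.t

/-- `x ⊗ y ↦ t⁻¹_{xy}`. -/
def tinvMul : H ⊗[k] H →ₗ[k] T := D.tinv ∘ₗ LinearMap.mul' k H

/-- `x ⊗ y ↦ t_{xy}`. -/
def tMul : H ⊗[k] H →ₗ[k] T := D.t ∘ₗ LinearMap.mul' k H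

/-- `x ⊗ y ↦ t⁻¹_x t⁻¹_y`. -/
def tinvtinv : H ⊗[k] H →ₗ[k] T := LinearMap.mul' k T ∘ₗ TensorProduct.map D.tinv D.tinv

/-- The generic cocycle for the trivial cocycle: `σ(x,y) = t_{x₁} t_{y₁} t⁻¹_{x₂y₂}`. -/
def sigmaEps : H ⊗[k] H →ₗ[k] T := conv k D.tt D.tinvMul

/-- Its convolution inverse: `σ⁻¹(x,y) = t_{x₁y₁} t⁻¹_{x₂} t⁻¹_{y₂}`. -/
def sigmaEpsInv : H ⊗[k] H →ₗ[k] T := conv k D.tMul D.tinvtinv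

/-- The generic cocycle attached to `α`: `σ_α(x,y) = t_{x₁} t_{y₁} α(x₂,y₂) t⁻¹_{x₃y₃}`. -/
def sigma (α : H ⊗[k] H →ₗ[k] k) : H ⊗[k] H →ₗ[k] T :=
  conv k (conv k D.tt (Algebra.linearMap k T ∘ₗ α)) D.tinvMul

/-- The inverse generic cocycle: `σ_α⁻¹(x,y) = t_{x₁y₁} α⁻¹(x₂,y₂) t⁻¹_{x₃} t⁻¹_{y₃}`. -/
def sigmaInv (αinv : H ⊗[k] H →ₗ[k] k) : H ⊗[k] H →ₗ[k] T :=
  conv k (conv k D.tMul (Algebra.linearMap k T ∘ₗ αinv)) D.tinvtinv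

/-- The generic base algebra `B_H^α`: the subalgebra of `S(t_H)_Θ` generated by the values
of the generic cocycle `σ_α` and of its inverse. -/
def genBase (α αinv : H ⊗[k] H →ₗ[k] k) : Subalgebra k T :=
  Algebra.adjoin k
    (Set.range (fun p : H × H => D.sigma α (p.1 ⊗ₜ[k] p.2)) ∪
      Set.range (fun p : H × H => D.sigmaInv αinv (p.1 ⊗ₜ[k] p.2)))

/-- The generic base algebra `B_H` for the trivial cocycle. -/
def B : Subalgebra k T :=
  Algebra.adjoin k
    (Set.range (fun p : H × H => D.sigmaEps (p.1 ⊗ₜ[k] p.2)) ∪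
      Set.range (fun p : H × H => D.sigmaEpsInv (p.1 ⊗ₜ[k] p.2)))

end TakData

section Stmt4

variable (X : Type)

/-- The free abelian group on `X`, written multiplicatively. -/
abbrev FreeAb := Multiplicative (X →₀ ℤ)

/-- The comultiplication of the group algebra `k[ℤ^(X)]`, making every group element
grouplike. -/
def comulG : MonoidAlgebra k (FreeAb X) →ₗ[k]
    MonoidAlgebra k (FreeAb X) ⊗[k] MonoidAlgebra k (FreeAb X) :=
  (Finsupp.lsum k fun g => LinearMap.toSpanSingleton k _
    ((MonoidAlgebra.single g (1 : k)) ⊗ₜ[k] (MonoidAlgebra.single g (1 : k))))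
    ∘ₗ (MonoidAlgebra.coeffLinearEquiv k).toLinearMap

/-- The counit of the group algebra `k[ℤ^(X)]`. -/
def counitG : MonoidAlgebra k (FreeAb X) →ₗ[k] k :=
  Finsupp.lsum k (fun (_ : FreeAb X) => (LinearMap.id : k →ₗ[k] k))
    ∘ₗ (MonoidAlgebra.coeffLinearEquiv k).toLinearMap

theorem maLhomExt {R M N : Type} [CommSemiring R] [AddCommMonoid N] [Module R N]
    ⦃f g : MonoidAlgebra R M →ₗ[R] N⦄
    (H : ∀ m r, f (MonoidAlgebra.single m r) = g (MonoidAlgebra.single m r)) : f = g :=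
  MonoidAlgebra.lhom_ext' fun x => LinearMap.ext fun a => H x a


section HopfInstance

lemma comulG_single (g : FreeAb X) (a : k) :
    comulG k X (MonoidAlgebra.single g a) =
      a • (MonoidAlgebra.single g (1:k) ⊗ₜ[k] MonoidAlgebra.single g (1:k)) :=
  Finsupp.lsum_single k _ _ _

lemma counitG_single (g : FreeAb X) (a : k) : counitG k X (MonoidAlgebra.single g a) = a :=
  Finsupp.lsum_single k _ _ _

/-- The grouplike elements, as a monoid hom into the tensor square. -/
def glG : FreeAb X →* MonoidAlgebra k (FreeAb X) ⊗[k] MonoidAlgebra k (FreeAb X) where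
  toFun g := MonoidAlgebra.single g (1:k) ⊗ₜ[k] MonoidAlgebra.single g (1:k)
  map_one' := by
    rw [Algebra.TensorProduct.one_def, MonoidAlgebra.one_def]
  map_mul' g h := by
    simp [Algebra.TensorProduct.tmul_mul_tmul, MonoidAlgebra.single_mul_single]

lemma comulG_eq : comulG k X
    = (MonoidAlgebra.lift k _ (FreeAb X) (glG k X)).toLinearMap := by
  refine maLhomExt fun g a => ?_
  show comulG k X (MonoidAlgebra.single g a)
    = MonoidAlgebra.lift k _ (FreeAb X) (glG k X) (MonoidAlgebra.single g a)
  rw [comulG_single, MonoidAlgebra.lift_single]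
  rfl

lemma counitG_eq : counitG k X
    = (MonoidAlgebra.lift k k (FreeAb X) 1).toLinearMap := by
  refine maLhomExt fun g a => ?_
  show counitG k X (MonoidAlgebra.single g a)
    = MonoidAlgebra.lift k k (FreeAb X) 1 (MonoidAlgebra.single g a)
  rw [counitG_single, MonoidAlgebra.lift_single]
  simp

instance : Coalgebra k (MonoidAlgebra k (FreeAb X)) where
  comul := comulG k X
  counit := counitG k X
  coassoc := by
    refine maLhomExt fun g a => ?_
    show (TensorProduct.assoc k _ _ _).toLinearMap
        ((LinearMap.rTensor _ (comulG k X)) (comulG k X (MonoidAlgebra.single g a)))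
      = (LinearMap.lTensor _ (comulG k X)) (comulG k X (MonoidAlgebra.single g a))
    rw [comulG_single]
    simp [comulG_single, TensorProduct.smul_tmul']
  rTensor_counit_comp_comul := by
    refine maLhomExt fun g a => ?_
    show (LinearMap.rTensor _ (counitG k X)) (comulG k X (MonoidAlgebra.single g a))
      = 1 ⊗ₜ[k] MonoidAlgebra.single g a
    rw [comulG_single]
    simp only [map_smul, LinearMap.rTensor_tmul, counitG_single]
    rw [← TensorProduct.tmul_smul, MonoidAlgebra.smul_single', mul_one]
  lTensor_counit_comp_comul := by
    refine maLhomExt fun g a => ?_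
    show (LinearMap.lTensor _ (counitG k X)) (comulG k X (MonoidAlgebra.single g a))
      = MonoidAlgebra.single g a ⊗ₜ[k] 1
    rw [comulG_single]
    simp only [map_smul, LinearMap.lTensor_tmul, counitG_single]
    rw [TensorProduct.smul_tmul', MonoidAlgebra.smul_single', mul_one]

lemma comulMA : (Coalgebra.comul : MonoidAlgebra k (FreeAb X) →ₗ[k] _) = comulG k X := rfl
lemma counitMA : (Coalgebra.counit : MonoidAlgebra k (FreeAb X) →ₗ[k] k) = counitG k X := rfl

instance : Bialgebra k (MonoidAlgebra k (FreeAb X)) :=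
  Bialgebra.mk' k _
    (by rw [counitMA, counitG_eq]; simp)
    (fun {a b} => by rw [counitMA, counitG_eq]; simp)
    (by rw [comulMA, comulG_eq]; simp)
    (fun {a b} => by rw [comulMA, comulG_eq]; simp)

/-- The antipode of the group algebra. -/
def antipodeG : MonoidAlgebra k (FreeAb X) →ₗ[k] MonoidAlgebra k (FreeAb X) :=
  (Finsupp.lsum k fun g => LinearMap.toSpanSingleton k _ (MonoidAlgebra.single g⁻¹ (1:k)))
    ∘ₗ (MonoidAlgebra.coeffLinearEquiv k).toLinearMap

lemma antipodeG_single (g : FreeAb X) (a : k) :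
    antipodeG k X (MonoidAlgebra.single g a) = a • MonoidAlgebra.single g⁻¹ (1:k) :=
  Finsupp.lsum_single k _ _ _

instance : HopfAlgebra k (MonoidAlgebra k (FreeAb X)) where
  antipode := antipodeG k X
  mul_antipode_rTensor_comul := by
    refine maLhomExt fun g a => ?_
    show LinearMap.mul' k _ ((LinearMap.rTensor _ (antipodeG k X))
        (comulG k X (MonoidAlgebra.single g a)))
      = Algebra.linearMap k _ (counitG k X (MonoidAlgebra.single g a))
    rw [comulG_single, counitG_single]
    simp only [map_smul, LinearMap.rTensor_tmul, antipodeG_single, one_smul,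
      LinearMap.mul'_apply, MonoidAlgebra.single_mul_single, one_mul, inv_mul_cancel]
    rw [Algebra.linearMap_apply, Algebra.algebraMap_eq_smul_one, MonoidAlgebra.one_def]
  mul_antipode_lTensor_comul := by
    refine maLhomExt fun g a => ?_
    show LinearMap.mul' k _ ((LinearMap.lTensor _ (antipodeG k X))
        (comulG k X (MonoidAlgebra.single g a)))
      = Algebra.linearMap k _ (counitG k X (MonoidAlgebra.single g a))
    rw [comulG_single, counitG_single]
    simp only [map_smul, LinearMap.lTensor_tmul, antipodeG_single, one_smul,
      LinearMap.mul'_apply, MonoidAlgebra.single_mul_single, mul_one, mul_inv_cancel]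
    rw [Algebra.linearMap_apply, Algebra.algebraMap_eq_smul_one, MonoidAlgebra.one_def]

end HopfInstance

section ProofAux

variable {k X}
variable {T : Type} [CommRing T] [HopfAlgebra k T]

lemma comul_basis (x : X) :
    Coalgebra.comul (R := k) (Finsupp.single x (1:k)) =
      Finsupp.single x (1:k) ⊗ₜ[k] Finsupp.single x (1:k) := by
  rw [Finsupp.comul_single]
  simp

lemma counit_basis (x : X) : Coalgebra.counit (R := k) (Finsupp.single x (1:k)) = 1 := by
  simp

lemma t_mul_tinv (D : TakData k (X →₀ k) T) (x : X) :
    D.t (Finsupp.single x 1) * D.tinv (Finsupp.single x 1) = 1 := by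
  have h := LinearMap.congr_fun D.conv_t_tinv (Finsupp.single x (1:k))
  simpa [conv, convOne, comul_basis, counit_basis] using h

/-- The image of a basis grouplike, as a unit of `T`. -/
def unitT (D : TakData k (X →₀ k) T) (x : X) : Tˣ where
  val := D.t (Finsupp.single x 1)
  inv := D.tinv (Finsupp.single x 1)
  val_inv := t_mul_tinv D x
  inv_val := by rw [mul_comm]; exact t_mul_tinv D x

/-- The induced map from the free abelian group to the units of `T`. -/
def uT (D : TakData k (X →₀ k) T) : FreeAb X →* Tˣ :=
  AddMonoidHom.toMultiplicativeLeft
    (Finsupp.liftAddHom fun x => zmultiplesHom (Additive Tˣ) (Additive.ofMul (unitT D x)))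

lemma uT_single (D : TakData k (X →₀ k) T) (x : X) :
    uT D (Multiplicative.ofAdd (Finsupp.single x (1:ℤ))) = unitT D x := by
  show Additive.toMul ((Finsupp.liftAddHom fun x =>
    zmultiplesHom (Additive Tˣ) (Additive.ofMul (unitT D x))) (Finsupp.single x 1)) = _
  rw [Finsupp.liftAddHom_apply_single]
  simp

/-- Extensionality for monoid homs out of the free abelian group into a group. -/
lemma freeAb_hom_ext {M : Type} [Group M] {h₁ h₂ : FreeAb X →* M}
    (H : ∀ x : X, h₁ (Multiplicative.ofAdd (Finsupp.single x (1:ℤ)))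
      = h₂ (Multiplicative.ofAdd (Finsupp.single x (1:ℤ)))) : h₁ = h₂ := by
  refine MonoidHom.ext fun gg => ?_
  have key : ∀ a : X →₀ ℤ, h₁ (Multiplicative.ofAdd a) = h₂ (Multiplicative.ofAdd a) := by
    intro a
    induction a using Finsupp.induction_linear with
    | zero => rw [ofAdd_zero, map_one, map_one]
    | add f f' hf hf' => rw [ofAdd_add, map_mul, map_mul, hf, hf']
    | single x n =>
      rw [show Finsupp.single x n = n • Finsupp.single x (1:ℤ) by simp,
        ofAdd_zsmul, map_zpow, map_zpow, H]
  exact key (Multiplicative.toAdd gg)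

lemma comul_t_basis (D : TakData k (X →₀ k) T) (x : X) :
    Coalgebra.comul (R := k) (D.t (Finsupp.single x (1:k))) =
      D.t (Finsupp.single x 1) ⊗ₜ[k] D.t (Finsupp.single x 1) := by
  have h := LinearMap.congr_fun D.comul_t (Finsupp.single x (1:k))
  simpa [comul_basis] using h

lemma counit_t_basis (D : TakData k (X →₀ k) T) (x : X) :
    Coalgebra.counit (R := k) (D.t (Finsupp.single x (1:k))) = 1 := by
  have h := LinearMap.congr_fun D.counit_t (Finsupp.single x (1:k))
  simpa [counit_basis] using h

lemma unitT_val (D : TakData k (X →₀ k) T) (x : X) :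
    ((unitT D x : Tˣ) : T) = D.t (Finsupp.single x 1) := rfl

lemma comul_uT (D : TakData k (X →₀ k) T) (g : FreeAb X) :
    Coalgebra.comul (R := k) ((uT D g : T)) = (uT D g : T) ⊗ₜ[k] (uT D g : T) := by
  have hext : (Units.map (MonoidHomClass.toMonoidHom (Bialgebra.comulAlgHom k T))).comp (uT D)
      = ((Units.map (MonoidHomClass.toMonoidHom
            (Algebra.TensorProduct.includeLeft : T →ₐ[k] T ⊗[k] T))) *
          (Units.map (MonoidHomClass.toMonoidHom
            (Algebra.TensorProduct.includeRight : T →ₐ[k] T ⊗[k] T)))).comp (uT D) := by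
    refine freeAb_hom_ext fun x => Units.ext ?_
    simp only [MonoidHom.comp_apply, uT_single]
    show Coalgebra.comul (D.t (Finsupp.single x 1))
      = (D.t (Finsupp.single x 1) ⊗ₜ[k] 1) * ((1:T) ⊗ₜ[k] D.t (Finsupp.single x 1))
    rw [Algebra.TensorProduct.tmul_mul_tmul, one_mul, mul_one]
    exact comul_t_basis D x
  have h := congrArg Units.val (DFunLike.congr_fun hext g)
  have h' : Coalgebra.comul (R := k) ((uT D g : T))
      = ((uT D g : T) ⊗ₜ[k] 1) * ((1:T) ⊗ₜ[k] (uT D g : T)) := h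
  rw [h', Algebra.TensorProduct.tmul_mul_tmul, one_mul, mul_one]

lemma counit_uT (D : TakData k (X →₀ k) T) (g : FreeAb X) :
    Coalgebra.counit (R := k) ((uT D g : T)) = 1 := by
  have hext : (Units.map (MonoidHomClass.toMonoidHom (Bialgebra.counitAlgHom k T))).comp (uT D)
      = (1 : FreeAb X →* kˣ) := by
    refine freeAb_hom_ext fun x => Units.ext ?_
    simp only [MonoidHom.comp_apply, uT_single]
    show Coalgebra.counit (D.t (Finsupp.single x 1)) = ((1 : kˣ) : k)
    rw [Units.val_one]
    exact counit_t_basis D x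
  have h := congrArg Units.val (DFunLike.congr_fun hext g)
  have h' : Coalgebra.counit (R := k) ((uT D g : T)) = ((1 : kˣ) : k) := h
  rw [h', Units.val_one]

/-- The algebra map from the group algebra to `T`. -/
def GA (D : TakData k (X →₀ k) T) : MonoidAlgebra k (FreeAb X) →ₐ[k] T :=
  MonoidAlgebra.lift k T (FreeAb X) ((Units.coeHom T).comp (uT D))

lemma GA_single (D : TakData k (X →₀ k) T) (g : FreeAb X) (a : k) :
    GA D (MonoidAlgebra.single g a) = a • (uT D g : T) := by
  rw [GA, MonoidAlgebra.lift_single]; rfl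

end ProofAux

section FADef
variable {T : Type} [CommRing T] [HopfAlgebra k T]

/-- The coalgebra map from `kX` to the group algebra. -/
def fA : (X →₀ k) →ₗ[k] MonoidAlgebra k (FreeAb X) :=
  Finsupp.lsum k fun x => LinearMap.toSpanSingleton k _
    (MonoidAlgebra.single (Multiplicative.ofAdd (Finsupp.single x (1:ℤ))) (1:k))

lemma fA_single (x : X) (a : k) :
    fA k X (Finsupp.single x a)
      = MonoidAlgebra.single (Multiplicative.ofAdd (Finsupp.single x (1:ℤ))) a :=
  (Finsupp.lsum_single _ _ _ _).trans
    (by rw [LinearMap.toSpanSingleton_apply, MonoidAlgebra.smul_single', mul_one])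

lemma comul_fA : Coalgebra.comul ∘ₗ fA k X
    = TensorProduct.map (fA k X) (fA k X) ∘ₗ Coalgebra.comul := by
  refine Finsupp.lhom_ext fun x a => ?_
  show Coalgebra.comul (fA k X (Finsupp.single x a))
    = TensorProduct.map (fA k X) (fA k X) (Coalgebra.comul (Finsupp.single x a))
  rw [fA_single, comulMA, comulG_single, Finsupp.comul_single]
  simp only [CommSemiring.comul_apply, TensorProduct.map_tmul, Finsupp.lsingle_apply, fA_single]
  rw [← TensorProduct.tmul_smul, MonoidAlgebra.smul_single', mul_one]

lemma counit_fA : Coalgebra.counit ∘ₗ fA k X = (Coalgebra.counit : (X →₀ k) →ₗ[k] k) := by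
  refine Finsupp.lhom_ext fun x a => ?_
  show Coalgebra.counit (fA k X (Finsupp.single x a)) = Coalgebra.counit (Finsupp.single x a)
  rw [fA_single, counitMA, counitG_single]
  simp

lemma GA_fA {T : Type} [CommRing T] [HopfAlgebra k T] (D : TakData k (X →₀ k) T) :
    (GA D).toLinearMap ∘ₗ fA k X = D.t := by
  refine Finsupp.lhom_ext fun x a => ?_
  show GA D (fA k X (Finsupp.single x a)) = D.t (Finsupp.single x a)
  rw [fA_single, GA_single, uT_single,
    show (Finsupp.single x a : X →₀ k) = a • Finsupp.single x (1:k) by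
      rw [Finsupp.smul_single', mul_one],
    map_smul, unitT_val]

end FADef


/-- Let `C = kX` be the coalgebra freely spanned by a set `X` of grouplike
elements (modelled as `X →₀ k` with `Δ(x) = x ⊗ x`, `ε(x) = 1`). Then the free commutative
Hopf algebra `S(t_C)_Θ` is isomorphic as a Hopf algebra to the group algebra `k[ℤ^(X)]` of
the free abelian group on `X`. -/
theorem free_hopf_of_grouplike_coalgebra
    (T : Type) [CommRing T] [HopfAlgebra k T] (D : TakData k (X →₀ k) T)
    (univ : ∀ (A : Type) [CommRing A] [HopfAlgebra k A] (f : (X →₀ k) →ₗ[k] A),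
      Coalgebra.comul ∘ₗ f = TensorProduct.map f f ∘ₗ Coalgebra.comul →
      Coalgebra.counit ∘ₗ f = Coalgebra.counit →
      ∃! F : T →ₐ[k] A,
        (Coalgebra.comul ∘ₗ F.toLinearMap
          = TensorProduct.map F.toLinearMap F.toLinearMap ∘ₗ Coalgebra.comul) ∧
        (Coalgebra.counit ∘ₗ F.toLinearMap = (Coalgebra.counit : T →ₗ[k] k)) ∧
        F.toLinearMap ∘ₗ D.t = f) :
    ∃ Φ : T ≃ₐ[k] MonoidAlgebra k (FreeAb X),
      (comulG k X ∘ₗ Φ.toLinearMap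
        = TensorProduct.map Φ.toLinearMap Φ.toLinearMap ∘ₗ Coalgebra.comul) ∧
      (counitG k X ∘ₗ Φ.toLinearMap = (Coalgebra.counit : T →ₗ[k] k)) ∧
      (∀ x : X,
        Φ (D.t (Finsupp.single x 1))
          = MonoidAlgebra.single
              (Multiplicative.ofAdd (Finsupp.single x (1 : ℤ))) (1 : k)) := by
  obtain ⟨F, ⟨hF1, hF2, hF3⟩, -⟩ :=
    univ (MonoidAlgebra k (FreeAb X)) (fA k X) (comul_fA k X) (counit_fA k X)
  obtain ⟨E, -, hEuniq⟩ := univ T D.t D.comul_t D.counit_t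
  -- `GA D` is a coalgebra morphism
  have hGA1 : Coalgebra.comul ∘ₗ (GA D).toLinearMap
      = TensorProduct.map (GA D).toLinearMap (GA D).toLinearMap ∘ₗ Coalgebra.comul := by
    refine maLhomExt fun g a => ?_
    show Coalgebra.comul (GA D (MonoidAlgebra.single g a))
      = TensorProduct.map (GA D).toLinearMap (GA D).toLinearMap
          (Coalgebra.comul (MonoidAlgebra.single g a))
    rw [GA_single, comulMA, comulG_single, map_smul, map_smul, comul_uT,
      TensorProduct.map_tmul]
    show _ = a • ((GA D (MonoidAlgebra.single g 1)) ⊗ₜ[k] (GA D (MonoidAlgebra.single g 1)))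
    rw [GA_single, one_smul]
  have hGA2 : Coalgebra.counit ∘ₗ (GA D).toLinearMap
      = (Coalgebra.counit : MonoidAlgebra k (FreeAb X) →ₗ[k] k) := by
    refine maLhomExt fun g a => ?_
    show Coalgebra.counit (GA D (MonoidAlgebra.single g a))
      = Coalgebra.counit (MonoidAlgebra.single g a)
    rw [GA_single, map_smul, counit_uT, counitMA, counitG_single, smul_eq_mul, mul_one]
  -- `GA D ∘ F = id` by the uniqueness part of the universal property
  have hGF : (GA D).comp F = AlgHom.id k T := by
    have e1 : (GA D).comp F = E := by
      refine hEuniq _ ⟨?_, ?_, ?_⟩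
      · rw [AlgHom.comp_toLinearMap, ← LinearMap.comp_assoc, hGA1, LinearMap.comp_assoc,
          hF1, ← LinearMap.comp_assoc, ← TensorProduct.map_comp]
      · rw [AlgHom.comp_toLinearMap, ← LinearMap.comp_assoc, hGA2, hF2]
      · rw [AlgHom.comp_toLinearMap, LinearMap.comp_assoc, hF3, GA_fA]
    have e2 : AlgHom.id k T = E := by
      refine hEuniq _ ⟨?_, ?_, ?_⟩
      · rw [show (AlgHom.id k T).toLinearMap = LinearMap.id from rfl, LinearMap.comp_id, TensorProduct.map_id, LinearMap.id_comp]
      · rw [show (AlgHom.id k T).toLinearMap = LinearMap.id from rfl, LinearMap.comp_id]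
      · rw [show (AlgHom.id k T).toLinearMap = LinearMap.id from rfl, LinearMap.id_comp]
    rw [e1, e2]
  -- `F ∘ GA D = id`
  have hF_u : ∀ g : FreeAb X, F ((uT D g : T)) = MonoidAlgebra.single g (1:k) := by
    have hext : (Units.map (MonoidHomClass.toMonoidHom F)).comp (uT D)
        = (Units.map (MonoidAlgebra.of k (FreeAb X))).comp
            (toUnits : FreeAb X ≃* (FreeAb X)ˣ).toMonoidHom := by
      refine freeAb_hom_ext fun x => Units.ext ?_
      simp only [MonoidHom.comp_apply, uT_single]
      show F (D.t (Finsupp.single x 1))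
        = MonoidAlgebra.of k (FreeAb X) (Multiplicative.ofAdd (Finsupp.single x (1:ℤ)))
      have h3 := LinearMap.congr_fun hF3 (Finsupp.single x (1:k))
      rw [LinearMap.comp_apply] at h3
      rw [show F (D.t (Finsupp.single x 1)) = F.toLinearMap (D.t (Finsupp.single x 1)) from rfl,
        h3, fA_single, MonoidAlgebra.of_apply]
    intro g
    have h := congrArg Units.val (DFunLike.congr_fun hext g)
    exact h
  have hFG : F.comp (GA D) = AlgHom.id k (MonoidAlgebra k (FreeAb X)) := by
    refine MonoidAlgebra.algHom_ext (fun g => ?_) (Subsingleton.elim _ _)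
    rw [AlgHom.comp_apply, GA_single, one_smul, hF_u g, AlgHom.id_apply]
  refine ⟨AlgEquiv.ofAlgHom F (GA D) hFG hGF, ?_, ?_, ?_⟩
  · exact hF1
  · exact hF2
  · intro x
    have h3 := LinearMap.congr_fun hF3 (Finsupp.single x (1:k))
    rw [LinearMap.comp_apply] at h3
    rw [fA_single] at h3
    exact h3

end Stmt4
end
end

section
/- Let H be a Hopf algebra and α a convolution-invertible two-cocycle on H with values in k. The bilinear map σ : H × H → S(t_H)_Θ defined by σ(x,y) = t_{x₁}t_{y₁}α(x₂,y₂)t⁻¹_{x₃y₃} is a two-cocycle of H with values in the commutative algebra S(t_H)_Θ, i.e., σ(x₁,y₁)σ(x₂y₂,z) = σ(y₁,z₁)σ(x,y₂z₂) for all x,y,z ∈ H. -/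
open TensorProduct

noncomputable section

variable (k : Type) [Field k]

variable (C : Type) [AddCommGroup C] [Module k C] [Coalgebra k C]

namespace GenericCocycle

open Coalgebra TensorProduct LinearMap

variable {k : Type} [Field k]

section ConvBasic

variable {C : Type} [AddCommGroup C] [Module k C] [Coalgebra k C]
  {A : Type} [Ring A] [Algebra k A]

theorem conv_def (f g : C →ₗ[k] A) :
    conv k f g = LinearMap.mul' k A ∘ₗ map f g ∘ₗ Coalgebra.comul := rfl

theorem mul'_map_mul'_id (A : Type) [Ring A] [Algebra k A] :
    LinearMap.mul' k A ∘ₗ map (LinearMap.mul' k A) LinearMap.id =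
      LinearMap.mul' k A ∘ₗ map LinearMap.id (LinearMap.mul' k A)
        ∘ₗ (TensorProduct.assoc k A A A).toLinearMap := by
  apply TensorProduct.ext_threefold
  intro a b c
  simp [LinearMap.mul'_apply, mul_assoc]

set_option maxHeartbeats 1000000 in
theorem conv_assoc (f g h : C →ₗ[k] A) :
    conv k (conv k f g) h = conv k f (conv k g h) := by
  have e1 : map (conv k f g) h =
      map (LinearMap.mul' k A) LinearMap.id ∘ₗ map (map f g) h
        ∘ₗ map Coalgebra.comul LinearMap.id := by
    rw [← TensorProduct.map_comp, ← TensorProduct.map_comp, LinearMap.id_comp,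
      LinearMap.comp_id]
    rfl
  have e2 : map f (conv k g h) =
      map LinearMap.id (LinearMap.mul' k A) ∘ₗ map f (map g h)
        ∘ₗ map LinearMap.id Coalgebra.comul := by
    rw [← TensorProduct.map_comp, ← TensorProduct.map_comp, LinearMap.id_comp,
      LinearMap.comp_id]
    rfl
  have hco : map (Coalgebra.comul (R := k) (A := C)) LinearMap.id ∘ₗ Coalgebra.comul =
      (TensorProduct.assoc k C C C).symm.toLinearMap
        ∘ₗ map LinearMap.id Coalgebra.comul ∘ₗ Coalgebra.comul := by
    exact (Coalgebra.coassoc_symm (R := k) (A := C)).symm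
  have hAssoc : (TensorProduct.assoc k A A A).toLinearMap
      ∘ₗ (TensorProduct.assoc k A A A).symm.toLinearMap = LinearMap.id :=
    LinearMap.ext fun x => (TensorProduct.assoc k A A A).apply_symm_apply x
  rw [conv_def (conv k f g) h, conv_def f (conv k g h), e1, e2]
  calc LinearMap.mul' k A ∘ₗ (map (LinearMap.mul' k A) LinearMap.id ∘ₗ map (map f g) h
        ∘ₗ map Coalgebra.comul LinearMap.id) ∘ₗ Coalgebra.comul
      = (LinearMap.mul' k A ∘ₗ map (LinearMap.mul' k A) LinearMap.id) ∘ₗ map (map f g) h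
        ∘ₗ (map Coalgebra.comul LinearMap.id ∘ₗ Coalgebra.comul) := by
        simp only [LinearMap.comp_assoc]
    _ = (LinearMap.mul' k A ∘ₗ map (LinearMap.mul' k A) LinearMap.id) ∘ₗ map (map f g) h
        ∘ₗ ((TensorProduct.assoc k C C C).symm.toLinearMap
          ∘ₗ map LinearMap.id Coalgebra.comul ∘ₗ Coalgebra.comul) := by rw [hco]
    _ = (LinearMap.mul' k A ∘ₗ map (LinearMap.mul' k A) LinearMap.id)
        ∘ₗ (map (map f g) h ∘ₗ (TensorProduct.assoc k C C C).symm.toLinearMap)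
        ∘ₗ map LinearMap.id Coalgebra.comul ∘ₗ Coalgebra.comul := by
        simp only [LinearMap.comp_assoc]
    _ = (LinearMap.mul' k A ∘ₗ map (LinearMap.mul' k A) LinearMap.id)
        ∘ₗ ((TensorProduct.assoc k A A A).symm.toLinearMap ∘ₗ map f (map g h))
        ∘ₗ map LinearMap.id Coalgebra.comul ∘ₗ Coalgebra.comul := by
        rw [TensorProduct.map_map_comp_assoc_symm_eq]
    _ = ((LinearMap.mul' k A ∘ₗ map LinearMap.id (LinearMap.mul' k A))
        ∘ₗ ((TensorProduct.assoc k A A A).toLinearMap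
          ∘ₗ (TensorProduct.assoc k A A A).symm.toLinearMap)) ∘ₗ map f (map g h)
        ∘ₗ map LinearMap.id Coalgebra.comul ∘ₗ Coalgebra.comul := by
        rw [mul'_map_mul'_id]; simp only [LinearMap.comp_assoc]
    _ = LinearMap.mul' k A ∘ₗ (map LinearMap.id (LinearMap.mul' k A) ∘ₗ map f (map g h)
        ∘ₗ map LinearMap.id Coalgebra.comul) ∘ₗ Coalgebra.comul := by
        rw [hAssoc]; simp only [LinearMap.comp_id, LinearMap.comp_assoc]

end ConvBasic

end GenericCocycle
namespace GenericCocycle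

section ConvMore

variable {k : Type} [Field k]
variable {C : Type} [AddCommGroup C] [Module k C] [Coalgebra k C]
  {C' : Type} [AddCommGroup C'] [Module k C'] [Coalgebra k C']
  {A : Type} [Ring A] [Algebra k A]

open TensorProduct

theorem conv_one_left (f : C →ₗ[k] A) : conv k (convOne k) f = f := by
  have e : TensorProduct.map (convOne k (C := C) (A := A)) f
      = TensorProduct.map (Algebra.linearMap k A) f
        ∘ₗ TensorProduct.map Coalgebra.counit LinearMap.id := by
    rw [← TensorProduct.map_comp, LinearMap.comp_id]; rfl
  have h2 : TensorProduct.map (Coalgebra.counit (R := k) (A := C)) LinearMap.id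
      ∘ₗ Coalgebra.comul = TensorProduct.mk k k C 1 :=
    Coalgebra.rTensor_counit_comp_comul
  rw [conv_def, e, LinearMap.comp_assoc, h2]
  apply LinearMap.ext; intro c
  simp [LinearMap.mul'_apply]

theorem conv_one_right (f : C →ₗ[k] A) : conv k f (convOne k) = f := by
  have e : TensorProduct.map f (convOne k (C := C) (A := A))
      = TensorProduct.map f (Algebra.linearMap k A)
        ∘ₗ TensorProduct.map LinearMap.id Coalgebra.counit := by
    rw [← TensorProduct.map_comp, LinearMap.comp_id]; rfl
  have h2 : TensorProduct.map LinearMap.id (Coalgebra.counit (R := k) (A := C))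
      ∘ₗ Coalgebra.comul = (TensorProduct.mk k C k).flip 1 :=
    Coalgebra.lTensor_counit_comp_comul
  rw [conv_def, e, LinearMap.comp_assoc, h2]
  apply LinearMap.ext; intro c
  simp [LinearMap.mul'_apply]

theorem conv_comp (φ : C' →ₗc[k] C) (f g : C →ₗ[k] A) :
    conv k (f ∘ₗ φ.toLinearMap) (g ∘ₗ φ.toLinearMap) = conv k f g ∘ₗ φ.toLinearMap := by
  rw [conv_def, conv_def, TensorProduct.map_comp]
  simp only [LinearMap.comp_assoc]
  rw [φ.map_comp_comul]

theorem convOne_comp (φ : C' →ₗc[k] C) :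
    convOne k (C := C) (A := A) ∘ₗ φ.toLinearMap = convOne k := by
  unfold convOne
  rw [LinearMap.comp_assoc, φ.counit_comp]

theorem linearMap_comp_conv (f g : C →ₗ[k] k) :
    Algebra.linearMap k A ∘ₗ conv k f g
      = conv k (Algebra.linearMap k A ∘ₗ f) (Algebra.linearMap k A ∘ₗ g) := by
  have e : Algebra.linearMap k A ∘ₗ LinearMap.mul' k k
      = LinearMap.mul' k A ∘ₗ TensorProduct.map (Algebra.linearMap k A)
          (Algebra.linearMap k A) := by
    apply TensorProduct.ext'
    intro a b
    simp [LinearMap.mul'_apply]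
  rw [conv_def, conv_def, ← LinearMap.comp_assoc, ← LinearMap.comp_assoc, e,
    TensorProduct.map_comp]
  simp only [LinearMap.comp_assoc]

end ConvMore

section Projections

variable (k : Type) [Field k]
variable (M N : Type) [AddCommGroup M] [Module k M] [Coalgebra k M]
  [AddCommGroup N] [Module k N] [Coalgebra k N]

open TensorProduct

/-- Projection `M ⊗ N → M`, `m ⊗ n ↦ ε(n) • m`, as a coalgebra morphism. -/
noncomputable def qL : M ⊗[k] N →ₗc[k] M :=
  (Coalgebra.TensorProduct.rid k k M).toCoalgHom.comp
    (Coalgebra.TensorProduct.map (CoalgHom.id k M) (Coalgebra.counitCoalgHom k N))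

/-- Projection `M ⊗ N → N`, `m ⊗ n ↦ ε(m) • n`, as a coalgebra morphism. -/
noncomputable def qR : M ⊗[k] N →ₗc[k] N :=
  (Coalgebra.TensorProduct.lid k N).toCoalgHom.comp
    (Coalgebra.TensorProduct.map (Coalgebra.counitCoalgHom k M) (CoalgHom.id k N))

variable {k M N}

@[simp] theorem qL_tmul (m : M) (n : N) :
    qL k M N (m ⊗ₜ[k] n) = Coalgebra.counit (R := k) n • m := rfl

@[simp] theorem qR_tmul (m : M) (n : N) :
    qR k M N (m ⊗ₜ[k] n) = Coalgebra.counit (R := k) m • n := rfl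

theorem comul_tmul (m : M) (n : N) :
    Coalgebra.comul (R := k) (m ⊗ₜ[k] n)
      = TensorProduct.tensorTensorTensorComm k M M N N
          (Coalgebra.comul (R := k) m ⊗ₜ[k] Coalgebra.comul (R := k) n) := rfl

end Projections

end GenericCocycle
namespace GenericCocycle

open TensorProduct

variable {k : Type} [Field k]

section ReprLemmas

variable {C : Type} [AddCommGroup C] [Module k C] [Coalgebra k C]

theorem sum_counit_smul {ι : Type*} {c : C} (r : Coalgebra.Repr k c ι) :
    ∑ i ∈ r.index, Coalgebra.counit (R := k) (r.left i) • r.right i = c := by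
  have h := Coalgebra.sum_counit_tmul_eq (R := k) r
  have h2 := congrArg (TensorProduct.lid k C) h
  rw [map_sum] at h2
  simpa only [TensorProduct.lid_tmul, one_smul] using h2

theorem sum_smul_counit {ι : Type*} {c : C} (r : Coalgebra.Repr k c ι) :
    ∑ i ∈ r.index, Coalgebra.counit (R := k) (r.right i) • r.left i = c := by
  have h := Coalgebra.sum_tmul_counit_eq (R := k) r
  have h2 := congrArg (TensorProduct.rid k C) h
  rw [map_sum] at h2
  simpa only [TensorProduct.rid_tmul, one_smul] using h2

end ReprLemmas

section ProjComul

variable {M N : Type} [AddCommGroup M] [Module k M] [Coalgebra k M]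
  [AddCommGroup N] [Module k N] [Coalgebra k N]

theorem map_qL_qR_comul :
    TensorProduct.map (qL k M N).toLinearMap (qR k M N).toLinearMap
      ∘ₗ Coalgebra.comul = LinearMap.id := by
  apply TensorProduct.ext'
  intro m n
  have rm := Coalgebra.Repr.arbitrary k m
  have rn := Coalgebra.Repr.arbitrary k n
  simp only [LinearMap.coe_comp, Function.comp_apply, LinearMap.id_coe, id_eq]
  rw [comul_tmul, ← rm.eq, ← rn.eq]
  rw [TensorProduct.sum_tmul]
  simp only [TensorProduct.tmul_sum, map_sum, TensorProduct.tensorTensorTensorComm_tmul,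
    TensorProduct.map_tmul, CoalgHom.coe_toLinearMap, qL_tmul, qR_tmul]
  calc ∑ i ∈ rm.index, ∑ j ∈ rn.index,
        (Coalgebra.counit (R := k) (rn.left j) • rm.left i) ⊗ₜ[k]
          (Coalgebra.counit (R := k) (rm.right i) • rn.right j)
      = ∑ i ∈ rm.index, Coalgebra.counit (R := k) (rm.right i) •
          (rm.left i ⊗ₜ[k] (∑ j ∈ rn.index,
            Coalgebra.counit (R := k) (rn.left j) • rn.right j)) := by
        refine Finset.sum_congr rfl fun i _ => ?_
        rw [TensorProduct.tmul_sum, Finset.smul_sum]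
        refine Finset.sum_congr rfl fun j _ => ?_
        simp [TensorProduct.smul_tmul', TensorProduct.tmul_smul, smul_smul, mul_comm]
    _ = (∑ i ∈ rm.index, Coalgebra.counit (R := k) (rm.right i) • rm.left i) ⊗ₜ[k] n := by
        rw [sum_counit_smul rn, TensorProduct.sum_tmul]
        exact Finset.sum_congr rfl fun i _ => by rw [TensorProduct.smul_tmul']
    _ = m ⊗ₜ[k] n := by rw [sum_smul_counit rm]

theorem map_qR_qL_comul :
    TensorProduct.map (qR k M N).toLinearMap (qL k M N).toLinearMap
      ∘ₗ Coalgebra.comul = (TensorProduct.comm k M N).toLinearMap := by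
  apply TensorProduct.ext'
  intro m n
  have rm := Coalgebra.Repr.arbitrary k m
  have rn := Coalgebra.Repr.arbitrary k n
  simp only [LinearMap.coe_comp, Function.comp_apply, LinearEquiv.coe_coe,
    TensorProduct.comm_tmul]
  rw [comul_tmul, ← rm.eq, ← rn.eq]
  rw [TensorProduct.sum_tmul]
  simp only [TensorProduct.tmul_sum, map_sum, TensorProduct.tensorTensorTensorComm_tmul,
    TensorProduct.map_tmul, CoalgHom.coe_toLinearMap, qL_tmul, qR_tmul]
  calc ∑ i ∈ rm.index, ∑ j ∈ rn.index,
        (Coalgebra.counit (R := k) (rm.left i) • rn.left j) ⊗ₜ[k]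
          (Coalgebra.counit (R := k) (rn.right j) • rm.right i)
      = ∑ i ∈ rm.index, Coalgebra.counit (R := k) (rm.left i) •
          ((∑ j ∈ rn.index,
            Coalgebra.counit (R := k) (rn.right j) • rn.left j) ⊗ₜ[k] rm.right i) := by
        refine Finset.sum_congr rfl fun i _ => ?_
        rw [TensorProduct.sum_tmul, Finset.smul_sum]
        refine Finset.sum_congr rfl fun j _ => ?_
        simp [TensorProduct.smul_tmul', TensorProduct.tmul_smul, smul_smul, mul_comm]
    _ = n ⊗ₜ[k] (∑ i ∈ rm.index, Coalgebra.counit (R := k) (rm.left i) • rm.right i) := by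
        rw [sum_smul_counit rn, TensorProduct.tmul_sum]
        exact Finset.sum_congr rfl fun i _ => by
          rw [TensorProduct.tmul_smul]
    _ = n ⊗ₜ[k] m := by rw [sum_counit_smul rm]

variable {A : Type} [Ring A] [Algebra k A]

theorem conv_qL_qR (f : M →ₗ[k] A) (g : N →ₗ[k] A) :
    conv k (f ∘ₗ (qL k M N).toLinearMap) (g ∘ₗ (qR k M N).toLinearMap)
      = LinearMap.mul' k A ∘ₗ TensorProduct.map f g := by
  rw [conv_def, TensorProduct.map_comp, LinearMap.comp_assoc, map_qL_qR_comul,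
    LinearMap.comp_id]

theorem conv_qR_qL {A : Type} [CommRing A] [Algebra k A] (f : M →ₗ[k] A) (g : N →ₗ[k] A) :
    conv k (g ∘ₗ (qR k M N).toLinearMap) (f ∘ₗ (qL k M N).toLinearMap)
      = LinearMap.mul' k A ∘ₗ TensorProduct.map f g := by
  rw [conv_def, TensorProduct.map_comp, LinearMap.comp_assoc, map_qR_qL_comul]
  apply TensorProduct.ext'
  intro m n
  simp [LinearMap.mul'_apply, mul_comm]

end ProjComul

end GenericCocycle
namespace GenericCocycle

open TensorProduct

variable {k : Type} [Field k]

section Helpers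

variable {C : Type} [AddCommGroup C] [Module k C] [Coalgebra k C]
  {A : Type} [Ring A] [Algebra k A]

theorem conv_swap_head (a b X : C →ₗ[k] A) (hab : conv k a b = conv k b a) :
    conv k a (conv k b X) = conv k b (conv k a X) := by
  rw [← conv_assoc, hab, conv_assoc]

theorem conv_cancel_head (a b X : C →ₗ[k] A) (hab : conv k a b = convOne k) :
    conv k a (conv k b X) = X := by
  rw [← conv_assoc, hab, conv_one_left]

end Helpers

section MulCoalgHom

variable {M N : Type} [AddCommGroup M] [Module k M] [Coalgebra k M]
  [AddCommGroup N] [Module k N] [Coalgebra k N]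

@[simp] theorem counit_tmul (m : M) (n : N) :
    Coalgebra.counit (R := k) (m ⊗ₜ[k] n)
      = Coalgebra.counit (R := k) m * Coalgebra.counit (R := k) n := by
  rw [_root_.TensorProduct.counit_tmul, smul_eq_mul, mul_comm]

variable {H : Type} [Ring H] [Bialgebra k H]

/-- The multiplication of a bialgebra as a coalgebra morphism. -/
noncomputable def mulCoalgHom : H ⊗[k] H →ₗc[k] H where
  toLinearMap := LinearMap.mul' k H
  counit_comp := by
    apply TensorProduct.ext'
    intro x y
    simp [LinearMap.mul'_apply, mul_comm]
  map_comp_comul := by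
    have hmul : TensorProduct.map (LinearMap.mul' k H) (LinearMap.mul' k H)
        ∘ₗ (TensorProduct.tensorTensorTensorComm k H H H H).toLinearMap
        = LinearMap.mul' k (H ⊗[k] H) := by
      apply TensorProduct.ext_fourfold'
      intro a b c d
      simp [LinearMap.mul'_apply, Algebra.TensorProduct.tmul_mul_tmul]
    have hco : (Coalgebra.comul (R := k) (A := H ⊗[k] H))
        = (TensorProduct.tensorTensorTensorComm k H H H H).toLinearMap
          ∘ₗ TensorProduct.map Coalgebra.comul Coalgebra.comul := rfl
    rw [hco, ← LinearMap.comp_assoc, hmul]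
    apply TensorProduct.ext'
    intro x y
    simp [LinearMap.mul'_apply, Bialgebra.comul_mul]

@[simp] theorem mulCoalgHom_toLinearMap :
    (mulCoalgHom (k := k) (H := H)).toLinearMap = LinearMap.mul' k H := rfl

end MulCoalgHom

section ConvOneMap

variable {M N : Type} [AddCommGroup M] [Module k M] [Coalgebra k M]
  [AddCommGroup N] [Module k N] [Coalgebra k N]
  {A : Type} [Ring A] [Algebra k A]

theorem mul'_map_convOne (β : M →ₗ[k] A) :
    LinearMap.mul' k A ∘ₗ TensorProduct.map β (convOne k (C := N))
      = β ∘ₗ (qL k M N).toLinearMap := by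
  apply TensorProduct.ext'
  intro m n
  simp [LinearMap.mul'_apply, convOne, Algebra.smul_def, Algebra.commutes]

theorem convOne_map_mul' (β : N →ₗ[k] A) :
    LinearMap.mul' k A ∘ₗ TensorProduct.map (convOne k (C := M)) β
      = β ∘ₗ (qR k M N).toLinearMap := by
  apply TensorProduct.ext'
  intro m n
  simp [LinearMap.mul'_apply, convOne, Algebra.smul_def]

end ConvOneMap

end GenericCocycle
namespace GenericCocycle

open TensorProduct

section Main

variable {k : Type} [Field k] {H : Type} [Ring H] [HopfAlgebra k H]
  {T : Type} [CommRing T] [HopfAlgebra k T] (D : TakData k H T) (α : H ⊗[k] H →ₗ[k] k)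

set_option maxHeartbeats 1000000 in
theorem sigma_comp_qL :
    D.sigma α ∘ₗ (qL k (H ⊗[k] H) H).toLinearMap
      = conv k (conv k
          (conv k ((D.t ∘ₗ (qL k H H).toLinearMap) ∘ₗ (qL k (H ⊗[k] H) H).toLinearMap)
                  ((D.t ∘ₗ (qR k H H).toLinearMap) ∘ₗ (qL k (H ⊗[k] H) H).toLinearMap))
          ((Algebra.linearMap k T ∘ₗ α) ∘ₗ (qL k (H ⊗[k] H) H).toLinearMap))
          ((D.tinv ∘ₗ LinearMap.mul' k H) ∘ₗ (qL k (H ⊗[k] H) H).toLinearMap) := by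
  unfold TakData.sigma TakData.tt TakData.tinvMul
  rw [← conv_qL_qR D.t D.t]
  rw [← conv_comp (qL k (H ⊗[k] H) H), ← conv_comp (qL k (H ⊗[k] H) H),
    ← conv_comp (qL k (H ⊗[k] H) H)]

set_option maxHeartbeats 1000000 in
theorem sigma_comp_ML :
    D.sigma α ∘ₗ TensorProduct.map (LinearMap.mul' k H) LinearMap.id
      = conv k (conv k
          (conv k ((D.t ∘ₗ LinearMap.mul' k H) ∘ₗ (qL k (H ⊗[k] H) H).toLinearMap)
                  (D.t ∘ₗ (qR k (H ⊗[k] H) H).toLinearMap))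
          ((Algebra.linearMap k T ∘ₗ α) ∘ₗ TensorProduct.map (LinearMap.mul' k H) LinearMap.id))
          ((D.tinv ∘ₗ LinearMap.mul' k H)
            ∘ₗ TensorProduct.map (LinearMap.mul' k H) LinearMap.id) := by
  have hML : (Coalgebra.TensorProduct.map (mulCoalgHom (k := k) (H := H))
      (CoalgHom.id k H)).toLinearMap
      = TensorProduct.map (LinearMap.mul' k H) LinearMap.id := rfl
  unfold TakData.sigma TakData.tt TakData.tinvMul
  rw [← hML, ← conv_comp, ← conv_comp, hML]
  have h1 : (LinearMap.mul' k T ∘ₗ TensorProduct.map D.t D.t)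
      ∘ₗ TensorProduct.map (LinearMap.mul' k H) LinearMap.id
      = conv k ((D.t ∘ₗ LinearMap.mul' k H) ∘ₗ (qL k (H ⊗[k] H) H).toLinearMap)
          (D.t ∘ₗ (qR k (H ⊗[k] H) H).toLinearMap) := by
    rw [LinearMap.comp_assoc, ← TensorProduct.map_comp, LinearMap.comp_id,
      conv_qL_qR (D.t ∘ₗ LinearMap.mul' k H) D.t]
  rw [h1]

set_option maxHeartbeats 1000000 in
theorem sigma_comp_qR' :
    D.sigma α ∘ₗ (qR k H (H ⊗[k] H)).toLinearMap
      = conv k (conv k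
          (conv k ((D.t ∘ₗ (qL k H H).toLinearMap) ∘ₗ (qR k H (H ⊗[k] H)).toLinearMap)
                  ((D.t ∘ₗ (qR k H H).toLinearMap) ∘ₗ (qR k H (H ⊗[k] H)).toLinearMap))
          ((Algebra.linearMap k T ∘ₗ α) ∘ₗ (qR k H (H ⊗[k] H)).toLinearMap))
          ((D.tinv ∘ₗ LinearMap.mul' k H) ∘ₗ (qR k H (H ⊗[k] H)).toLinearMap) := by
  unfold TakData.sigma TakData.tt TakData.tinvMul
  rw [← conv_qL_qR D.t D.t]
  rw [← conv_comp (qR k H (H ⊗[k] H)), ← conv_comp (qR k H (H ⊗[k] H)),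
    ← conv_comp (qR k H (H ⊗[k] H))]

set_option maxHeartbeats 1000000 in
theorem sigma_comp_MR :
    D.sigma α ∘ₗ TensorProduct.map LinearMap.id (LinearMap.mul' k H)
      = conv k (conv k
          (conv k (D.t ∘ₗ (qL k H (H ⊗[k] H)).toLinearMap)
                  ((D.t ∘ₗ LinearMap.mul' k H) ∘ₗ (qR k H (H ⊗[k] H)).toLinearMap))
          ((Algebra.linearMap k T ∘ₗ α) ∘ₗ TensorProduct.map LinearMap.id (LinearMap.mul' k H)))
          ((D.tinv ∘ₗ LinearMap.mul' k H)
            ∘ₗ TensorProduct.map LinearMap.id (LinearMap.mul' k H)) := by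
  have hMR : (Coalgebra.TensorProduct.map (CoalgHom.id k H)
      (mulCoalgHom (k := k) (H := H))).toLinearMap
      = TensorProduct.map LinearMap.id (LinearMap.mul' k H) := rfl
  unfold TakData.sigma TakData.tt TakData.tinvMul
  rw [← hMR, ← conv_comp, ← conv_comp, hMR]
  have h1 : (LinearMap.mul' k T ∘ₗ TensorProduct.map D.t D.t)
      ∘ₗ TensorProduct.map LinearMap.id (LinearMap.mul' k H)
      = conv k (D.t ∘ₗ (qL k H (H ⊗[k] H)).toLinearMap)
          ((D.t ∘ₗ LinearMap.mul' k H) ∘ₗ (qR k H (H ⊗[k] H)).toLinearMap) := by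
    rw [LinearMap.comp_assoc, ← TensorProduct.map_comp, LinearMap.comp_id,
      conv_qL_qR D.t (D.t ∘ₗ LinearMap.mul' k H)]
  rw [h1]


theorem conv_swap_LR {M N : Type} [AddCommGroup M] [Module k M] [Coalgebra k M]
    [AddCommGroup N] [Module k N] [Coalgebra k N]
    (F : M →ₗ[k] T) (G : N →ₗ[k] T) :
    conv k (F ∘ₗ (qL k M N).toLinearMap) (G ∘ₗ (qR k M N).toLinearMap)
      = conv k (G ∘ₗ (qR k M N).toLinearMap) (F ∘ₗ (qL k M N).toLinearMap) := by
  rw [conv_qL_qR, conv_qR_qL]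

theorem cancel_L :
    conv k ((D.tinv ∘ₗ LinearMap.mul' k H) ∘ₗ (qL k (H ⊗[k] H) H).toLinearMap) ((D.t ∘ₗ LinearMap.mul' k H) ∘ₗ (qL k (H ⊗[k] H) H).toLinearMap) = convOne k := by
  rw [conv_comp (qL k (H ⊗[k] H) H), ← mulCoalgHom_toLinearMap (k := k) (H := H),
    conv_comp (mulCoalgHom (k := k) (H := H)), D.conv_tinv_t, convOne_comp, convOne_comp]

theorem cancel_R :
    conv k ((D.tinv ∘ₗ LinearMap.mul' k H) ∘ₗ (qR k H (H ⊗[k] H)).toLinearMap) ((D.t ∘ₗ LinearMap.mul' k H) ∘ₗ (qR k H (H ⊗[k] H)).toLinearMap) = convOne k := by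
  rw [conv_comp (qR k H (H ⊗[k] H)), ← mulCoalgHom_toLinearMap (k := k) (H := H),
    conv_comp (mulCoalgHom (k := k) (H := H)), D.conv_tinv_t, convOne_comp, convOne_comp]

set_option maxHeartbeats 2000000 in
theorem lhs_nf :
    conv k (D.sigma α ∘ₗ (qL k (H ⊗[k] H) H).toLinearMap) (D.sigma α ∘ₗ TensorProduct.map (LinearMap.mul' k H) LinearMap.id)
      = conv k ((D.t ∘ₗ (qL k H H).toLinearMap) ∘ₗ (qL k (H ⊗[k] H) H).toLinearMap) (conv k ((D.t ∘ₗ (qR k H H).toLinearMap) ∘ₗ (qL k (H ⊗[k] H) H).toLinearMap) (conv k (D.t ∘ₗ (qR k (H ⊗[k] H) H).toLinearMap)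
          (conv k ((Algebra.linearMap k T ∘ₗ α) ∘ₗ (qL k (H ⊗[k] H) H).toLinearMap) (conv k ((Algebra.linearMap k T ∘ₗ α) ∘ₗ TensorProduct.map (LinearMap.mul' k H) LinearMap.id) ((D.tinv ∘ₗ LinearMap.mul' k H) ∘ₗ TensorProduct.map (LinearMap.mul' k H) LinearMap.id))))) := by
  rw [sigma_comp_qL, sigma_comp_ML]
  simp only [conv_assoc]
  rw [conv_cancel_head ((D.tinv ∘ₗ LinearMap.mul' k H) ∘ₗ (qL k (H ⊗[k] H) H).toLinearMap) ((D.t ∘ₗ LinearMap.mul' k H) ∘ₗ (qL k (H ⊗[k] H) H).toLinearMap) _ (cancel_L D)]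
  rw [conv_swap_head ((Algebra.linearMap k T ∘ₗ α) ∘ₗ (qL k (H ⊗[k] H) H).toLinearMap) (D.t ∘ₗ (qR k (H ⊗[k] H) H).toLinearMap) _ (conv_swap_LR (Algebra.linearMap k T ∘ₗ α) D.t)]

set_option maxHeartbeats 2000000 in
theorem rhs_nf_inner :
    conv k (D.sigma α ∘ₗ (qR k H (H ⊗[k] H)).toLinearMap) (D.sigma α ∘ₗ TensorProduct.map LinearMap.id (LinearMap.mul' k H))
      = conv k (D.t ∘ₗ (qL k H (H ⊗[k] H)).toLinearMap) (conv k ((D.t ∘ₗ (qL k H H).toLinearMap) ∘ₗ (qR k H (H ⊗[k] H)).toLinearMap) (conv k ((D.t ∘ₗ (qR k H H).toLinearMap) ∘ₗ (qR k H (H ⊗[k] H)).toLinearMap)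
          (conv k ((Algebra.linearMap k T ∘ₗ α) ∘ₗ (qR k H (H ⊗[k] H)).toLinearMap) (conv k ((Algebra.linearMap k T ∘ₗ α) ∘ₗ TensorProduct.map LinearMap.id (LinearMap.mul' k H)) ((D.tinv ∘ₗ LinearMap.mul' k H) ∘ₗ TensorProduct.map LinearMap.id (LinearMap.mul' k H)))))) := by
  rw [sigma_comp_qR', sigma_comp_MR]
  simp only [conv_assoc]
  rw [conv_swap_head ((D.tinv ∘ₗ LinearMap.mul' k H) ∘ₗ (qR k H (H ⊗[k] H)).toLinearMap) (D.t ∘ₗ (qL k H (H ⊗[k] H)).toLinearMap) _ ((conv_swap_LR D.t (D.tinv ∘ₗ LinearMap.mul' k H)).symm)]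
  rw [conv_cancel_head ((D.tinv ∘ₗ LinearMap.mul' k H) ∘ₗ (qR k H (H ⊗[k] H)).toLinearMap) ((D.t ∘ₗ LinearMap.mul' k H) ∘ₗ (qR k H (H ⊗[k] H)).toLinearMap) _ (cancel_R D)]
  rw [conv_swap_head ((Algebra.linearMap k T ∘ₗ α) ∘ₗ (qR k H (H ⊗[k] H)).toLinearMap) (D.t ∘ₗ (qL k H (H ⊗[k] H)).toLinearMap) _ ((conv_swap_LR D.t (Algebra.linearMap k T ∘ₗ α)).symm)]
  rw [conv_swap_head ((D.t ∘ₗ (qR k H H).toLinearMap) ∘ₗ (qR k H (H ⊗[k] H)).toLinearMap) (D.t ∘ₗ (qL k H (H ⊗[k] H)).toLinearMap) _ ((conv_swap_LR D.t (D.t ∘ₗ (qR k H H).toLinearMap)).symm)]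
  rw [conv_swap_head ((D.t ∘ₗ (qL k H H).toLinearMap) ∘ₗ (qR k H (H ⊗[k] H)).toLinearMap) (D.t ∘ₗ (qL k H (H ⊗[k] H)).toLinearMap) _ ((conv_swap_LR D.t (D.t ∘ₗ (qL k H H).toLinearMap)).symm)]

theorem match1 : (D.t ∘ₗ (qL k H (H ⊗[k] H)).toLinearMap) ∘ₗ (TensorProduct.assoc k H H H).toLinearMap = (D.t ∘ₗ (qL k H H).toLinearMap) ∘ₗ (qL k (H ⊗[k] H) H).toLinearMap := by
  apply TensorProduct.ext_threefold
  intro x y z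
  simp [mul_comm, smul_smul]

theorem match2 : ((D.t ∘ₗ (qL k H H).toLinearMap) ∘ₗ (qR k H (H ⊗[k] H)).toLinearMap) ∘ₗ (TensorProduct.assoc k H H H).toLinearMap = (D.t ∘ₗ (qR k H H).toLinearMap) ∘ₗ (qL k (H ⊗[k] H) H).toLinearMap := by
  apply TensorProduct.ext_threefold
  intro x y z
  simp [mul_comm, smul_smul]

theorem match3 : ((D.t ∘ₗ (qR k H H).toLinearMap) ∘ₗ (qR k H (H ⊗[k] H)).toLinearMap) ∘ₗ (TensorProduct.assoc k H H H).toLinearMap = D.t ∘ₗ (qR k (H ⊗[k] H) H).toLinearMap := by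
  apply TensorProduct.ext_threefold
  intro x y z
  simp [mul_comm, smul_smul]

theorem match4 : ((D.tinv ∘ₗ LinearMap.mul' k H) ∘ₗ TensorProduct.map LinearMap.id (LinearMap.mul' k H)) ∘ₗ (TensorProduct.assoc k H H H).toLinearMap = (D.tinv ∘ₗ LinearMap.mul' k H) ∘ₗ TensorProduct.map (LinearMap.mul' k H) LinearMap.id := by
  apply TensorProduct.ext_threefold
  intro x y z
  simp [LinearMap.mul'_apply, mul_assoc]

set_option maxHeartbeats 1000000 in
theorem balance (hcoc : IsCocycle k α) :
    conv k ((Algebra.linearMap k T ∘ₗ α) ∘ₗ (qL k (H ⊗[k] H) H).toLinearMap) ((Algebra.linearMap k T ∘ₗ α) ∘ₗ TensorProduct.map (LinearMap.mul' k H) LinearMap.id)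
      = conv k (((Algebra.linearMap k T ∘ₗ α) ∘ₗ (qR k H (H ⊗[k] H)).toLinearMap) ∘ₗ (TensorProduct.assoc k H H H).toLinearMap) (((Algebra.linearMap k T ∘ₗ α) ∘ₗ TensorProduct.map LinearMap.id (LinearMap.mul' k H)) ∘ₗ (TensorProduct.assoc k H H H).toLinearMap) := by
  unfold IsCocycle at hcoc
  have hb := congrArg
    (fun f : ((H ⊗[k] H) ⊗[k] H) →ₗ[k] k => Algebra.linearMap k T ∘ₗ f) hcoc
  rw [linearMap_comp_conv, linearMap_comp_conv] at hb
  have e1 : Algebra.linearMap k T ∘ₗ (LinearMap.mul' k k ∘ₗ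
      TensorProduct.map α (convOne k)) = (Algebra.linearMap k T ∘ₗ α) ∘ₗ (qL k (H ⊗[k] H) H).toLinearMap := by
    apply TensorProduct.ext_threefold
    intro x y z
    simp [LinearMap.mul'_apply, convOne, map_smul, mul_comm]
  have e2 : Algebra.linearMap k T ∘ₗ (α ∘ₗ TensorProduct.map (LinearMap.mul' k H) LinearMap.id) = (Algebra.linearMap k T ∘ₗ α) ∘ₗ TensorProduct.map (LinearMap.mul' k H) LinearMap.id :=
    (LinearMap.comp_assoc _ _ _).symm
  have e3 : Algebra.linearMap k T ∘ₗ (LinearMap.mul' k k ∘ₗ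
      TensorProduct.map (convOne k) α ∘ₗ (TensorProduct.assoc k H H H).toLinearMap)
      = ((Algebra.linearMap k T ∘ₗ α) ∘ₗ (qR k H (H ⊗[k] H)).toLinearMap) ∘ₗ (TensorProduct.assoc k H H H).toLinearMap := by
    apply TensorProduct.ext_threefold
    intro x y z
    simp [LinearMap.mul'_apply, convOne, map_smul, mul_comm]
  have e4 : Algebra.linearMap k T ∘ₗ (α ∘ₗ TensorProduct.map LinearMap.id (LinearMap.mul' k H) ∘ₗ (TensorProduct.assoc k H H H).toLinearMap)
      = ((Algebra.linearMap k T ∘ₗ α) ∘ₗ TensorProduct.map LinearMap.id (LinearMap.mul' k H)) ∘ₗ (TensorProduct.assoc k H H H).toLinearMap := by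
    apply TensorProduct.ext_threefold
    intro x y z
    simp
  rw [e1, e2, e3, e4] at hb
  exact hb

end Main

end GenericCocycle

/-- The generic cocycle `σ(x,y) = t_{x₁}t_{y₁}α(x₂,y₂)t⁻¹_{x₃y₃}` attached to a
convolution-invertible two-cocycle `α` is a two-cocycle of `H` with values in `S(t_H)_Θ`. -/
theorem generic_cocycle_isCocycle
    {H : Type} [Ring H] [HopfAlgebra k H]
    {T : Type} [CommRing T] [HopfAlgebra k T] (D : TakData k H T)
    (α αinv : H ⊗[k] H →ₗ[k] k)
    (hcoc : IsCocycle k α) (hinv : IsConvInverse k α αinv) :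
    IsCocycle k (D.sigma α) := by
  classical
  unfold IsCocycle
  rw [GenericCocycle.mul'_map_convOne (D.sigma α)]
  rw [GenericCocycle.lhs_nf D α]
  have hg1 : LinearMap.mul' k T ∘ₗ TensorProduct.map (convOne k) (D.sigma α)
      ∘ₗ (TensorProduct.assoc k H H H).toLinearMap
      = (D.sigma α ∘ₗ (GenericCocycle.qR k H (H ⊗[k] H)).toLinearMap) ∘ₗ (TensorProduct.assoc k H H H).toLinearMap := by
    rw [← LinearMap.comp_assoc, GenericCocycle.convOne_map_mul']
  have hg2 : D.sigma α ∘ₗ TensorProduct.map LinearMap.id (LinearMap.mul' k H) ∘ₗ (TensorProduct.assoc k H H H).toLinearMap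
      = (D.sigma α ∘ₗ TensorProduct.map LinearMap.id (LinearMap.mul' k H)) ∘ₗ (TensorProduct.assoc k H H H).toLinearMap :=
    (LinearMap.comp_assoc _ _ _).symm
  rw [hg1, hg2]
  have hA3 : ((Coalgebra.TensorProduct.assoc k k H H H).toCoalgHom).toLinearMap
      = (TensorProduct.assoc k H H H).toLinearMap := rfl
  rw [← hA3, GenericCocycle.conv_comp]
  rw [GenericCocycle.rhs_nf_inner D α]
  rw [← GenericCocycle.conv_comp, ← GenericCocycle.conv_comp, ← GenericCocycle.conv_comp,
    ← GenericCocycle.conv_comp, ← GenericCocycle.conv_comp, hA3]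
  rw [GenericCocycle.match1 D, GenericCocycle.match2 D, GenericCocycle.match3 D,
    GenericCocycle.match4 D]
  rw [show conv k (((Algebra.linearMap k T ∘ₗ α) ∘ₗ (GenericCocycle.qR k H (H ⊗[k] H)).toLinearMap) ∘ₗ (TensorProduct.assoc k H H H).toLinearMap)
        (conv k (((Algebra.linearMap k T ∘ₗ α) ∘ₗ TensorProduct.map LinearMap.id (LinearMap.mul' k H)) ∘ₗ (TensorProduct.assoc k H H H).toLinearMap) ((D.tinv ∘ₗ LinearMap.mul' k H) ∘ₗ TensorProduct.map (LinearMap.mul' k H) LinearMap.id))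
      = conv k ((Algebra.linearMap k T ∘ₗ α) ∘ₗ (GenericCocycle.qL k (H ⊗[k] H) H).toLinearMap)
          (conv k ((Algebra.linearMap k T ∘ₗ α) ∘ₗ TensorProduct.map (LinearMap.mul' k H) LinearMap.id) ((D.tinv ∘ₗ LinearMap.mul' k H) ∘ₗ TensorProduct.map (LinearMap.mul' k H) LinearMap.id))
    from by
      rw [← GenericCocycle.conv_assoc, ← GenericCocycle.conv_assoc,
        GenericCocycle.balance α hcoc]]
end
end

section
/- Let H be a Hopf algebra, α a convolution-invertible two-cocycle on H with convolution inverse α⁻¹, and σ(x,y) = t_{x₁}t_{y₁}α(x₂,y₂)t⁻¹_{x₃y₃} the generic cocycle in S(t_H)_Θ. Then the map σ⁻¹(x,y) = t_{x₁y₁}α⁻¹(x₂,y₂)t⁻¹_{x₃}t⁻¹_{y₃} is the convolution inverse of σ, i.e., σ(x₁,y₁)σ⁻¹(x₂,y₂) = σ⁻¹(x₁,y₁)σ(x₂,y₂) = ε(x)ε(y)1. -/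
open TensorProduct

noncomputable section

variable (k : Type) [Field k]

variable (C : Type) [AddCommGroup C] [Module k C] [Coalgebra k C]

section ConvLemmas

open TensorProduct LinearMap Coalgebra

variable {A : Type} [CommRing A] [Algebra k A]
variable {C D : Type} [AddCommGroup C] [Module k C] [Coalgebra k C]
  [AddCommGroup D] [Module k D] [Coalgebra k D]

private lemma aux_mul_assoc :
    mul' k A ∘ₗ TensorProduct.map (mul' k A) id =
      (mul' k A ∘ₗ TensorProduct.map id (mul' k A)) ∘ₗ (TensorProduct.assoc k A A A).toLinearMap := by
  ext a b c
  simp [mul_assoc]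

private lemma aux_coassoc :
    TensorProduct.map id comul ∘ₗ (comul (R := k) (A := C)) =
      (TensorProduct.assoc k C C C).toLinearMap ∘ₗ TensorProduct.map comul id ∘ₗ comul := by
  have := Coalgebra.coassoc (R := k) (A := C)
  exact this.symm

theorem conv_assoc (f g h : C →ₗ[k] A) :
    conv k (conv k f g) h = conv k f (conv k g h) := by
  unfold conv
  have e1 : TensorProduct.map (mul' k A ∘ₗ TensorProduct.map f g ∘ₗ comul) h
      = TensorProduct.map (mul' k A) id ∘ₗ TensorProduct.map (TensorProduct.map f g) h
          ∘ₗ TensorProduct.map comul id := by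
    rw [← TensorProduct.map_comp, ← TensorProduct.map_comp]
    simp
  have e2 : TensorProduct.map f (mul' k A ∘ₗ TensorProduct.map g h ∘ₗ comul)
      = TensorProduct.map id (mul' k A) ∘ₗ TensorProduct.map f (TensorProduct.map g h)
          ∘ₗ TensorProduct.map id comul := by
    rw [← TensorProduct.map_comp, ← TensorProduct.map_comp]
    simp
  rw [e1, e2]
  calc mul' k A ∘ₗ (TensorProduct.map (mul' k A) id ∘ₗ
          TensorProduct.map (TensorProduct.map f g) h ∘ₗ TensorProduct.map comul id) ∘ₗ comul
      = ((mul' k A ∘ₗ TensorProduct.map (mul' k A) id) ∘ₗ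
          TensorProduct.map (TensorProduct.map f g) h) ∘ₗ TensorProduct.map comul id ∘ₗ comul := by
        simp only [LinearMap.comp_assoc]
    _ = ((mul' k A ∘ₗ TensorProduct.map id (mul' k A)) ∘ₗ
          ((TensorProduct.assoc k A A A).toLinearMap ∘ₗ
            TensorProduct.map (TensorProduct.map f g) h)) ∘ₗ
          TensorProduct.map comul id ∘ₗ comul := by
        rw [aux_mul_assoc]; simp only [LinearMap.comp_assoc]
    _ = ((mul' k A ∘ₗ TensorProduct.map id (mul' k A)) ∘ₗ
          TensorProduct.map f (TensorProduct.map g h)) ∘ₗ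
          (TensorProduct.assoc k C C C).toLinearMap ∘ₗ TensorProduct.map comul id ∘ₗ comul := by
        rw [← TensorProduct.map_map_comp_assoc_eq]; simp only [LinearMap.comp_assoc]
    _ = ((mul' k A ∘ₗ TensorProduct.map id (mul' k A)) ∘ₗ
          TensorProduct.map f (TensorProduct.map g h)) ∘ₗ
          TensorProduct.map id comul ∘ₗ comul := by
        rw [aux_coassoc]
    _ = mul' k A ∘ₗ (TensorProduct.map id (mul' k A) ∘ₗ
          TensorProduct.map f (TensorProduct.map g h) ∘ₗ TensorProduct.map id comul) ∘ₗ comul := by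
        simp only [LinearMap.comp_assoc]

theorem conv_convOne (f : C →ₗ[k] A) : conv k f (convOne k) = f := by
  unfold conv _root_.convOne
  have e1 : TensorProduct.map f (Algebra.linearMap k A ∘ₗ counit)
      = TensorProduct.map f (Algebra.linearMap k A) ∘ₗ (counit (R := k) (A := C)).lTensor C := by
    ext x y; simp
  rw [e1, LinearMap.comp_assoc, lTensor_counit_comp_comul]
  ext x
  simp

theorem convOne_conv (f : C →ₗ[k] A) : conv k (convOne k) f = f := by
  unfold conv _root_.convOne
  have e1 : TensorProduct.map (Algebra.linearMap k A ∘ₗ counit) f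
      = TensorProduct.map (Algebra.linearMap k A) f ∘ₗ (counit (R := k) (A := C)).rTensor C := by
    ext x y; simp
  rw [e1, LinearMap.comp_assoc, rTensor_counit_comp_comul]
  ext x
  simp

/-- Precomposition with a coalgebra morphism commutes with convolution. -/
theorem conv_comp (f g : C →ₗ[k] A) (φ : D →ₗ[k] C)
    (hφ : comul ∘ₗ φ = TensorProduct.map φ φ ∘ₗ comul) :
    conv k (f ∘ₗ φ) (g ∘ₗ φ) = conv k f g ∘ₗ φ := by
  unfold conv
  rw [TensorProduct.map_comp, LinearMap.comp_assoc, LinearMap.comp_assoc, ← hφ]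
  simp only [LinearMap.comp_assoc]

end ConvLemmas

section ConvLemmas2

open TensorProduct LinearMap Coalgebra

variable {A : Type} [CommRing A] [Algebra k A]
variable {C D : Type} [AddCommGroup C] [Module k C] [Coalgebra k C]
  [AddCommGroup D] [Module k D] [Coalgebra k D]

lemma comulTensor_eq : (Coalgebra.comul (R := k) (A := (C ⊗[k] D)))
    = (TensorProduct.tensorTensorTensorComm k C C D D).toLinearMap
        ∘ₗ TensorProduct.map Coalgebra.comul Coalgebra.comul := rfl

lemma counitTensor_eq : (Coalgebra.counit (R := k) (A := (C ⊗[k] D)))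
    = LinearMap.mul' k k ∘ₗ TensorProduct.map Coalgebra.counit Coalgebra.counit := by
  ext x y
  simp [TensorProduct.counit_tmul, mul_comm]

/-- Convolution of products of maps, for a commutative codomain. -/
lemma conv_mul_map (f₁ g₁ : C →ₗ[k] A) (f₂ g₂ : D →ₗ[k] A) :
    conv k (mul' k A ∘ₗ TensorProduct.map f₁ f₂) (mul' k A ∘ₗ TensorProduct.map g₁ g₂)
      = mul' k A ∘ₗ TensorProduct.map (conv k f₁ g₁) (conv k f₂ g₂) := by
  unfold conv
  rw [comulTensor_eq]
  have e1 : TensorProduct.map (mul' k A ∘ₗ TensorProduct.map f₁ f₂)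
        (mul' k A ∘ₗ TensorProduct.map g₁ g₂)
      = TensorProduct.map (mul' k A) (mul' k A)
          ∘ₗ TensorProduct.map (TensorProduct.map f₁ f₂) (TensorProduct.map g₁ g₂) := by
    rw [← TensorProduct.map_comp]
  have e2 : TensorProduct.map (TensorProduct.map f₁ f₂) (TensorProduct.map g₁ g₂)
        ∘ₗ (TensorProduct.tensorTensorTensorComm k C C D D).toLinearMap
      = (TensorProduct.tensorTensorTensorComm k A A A A).toLinearMap
          ∘ₗ TensorProduct.map (TensorProduct.map f₁ g₁) (TensorProduct.map f₂ g₂) := by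
    ext a b c d
    simp
  have e3 : mul' k A ∘ₗ TensorProduct.map (mul' k A) (mul' k A)
        ∘ₗ (TensorProduct.tensorTensorTensorComm k A A A A).toLinearMap
      = mul' k A ∘ₗ TensorProduct.map (mul' k A) (mul' k A) := by
    ext a b c d
    simp [mul_mul_mul_comm]
  have e4 : TensorProduct.map (mul' k A) (mul' k A)
        ∘ₗ TensorProduct.map (TensorProduct.map f₁ g₁) (TensorProduct.map f₂ g₂)
        ∘ₗ TensorProduct.map (Coalgebra.comul (R := k) (A := C))
            (Coalgebra.comul (R := k) (A := D))
      = TensorProduct.map (mul' k A ∘ₗ TensorProduct.map f₁ g₁ ∘ₗ Coalgebra.comul)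
          (mul' k A ∘ₗ TensorProduct.map f₂ g₂ ∘ₗ Coalgebra.comul) := by
    rw [← TensorProduct.map_comp, ← TensorProduct.map_comp]
  calc mul' k A ∘ₗ (TensorProduct.map (mul' k A ∘ₗ TensorProduct.map f₁ f₂)
          (mul' k A ∘ₗ TensorProduct.map g₁ g₂))
        ∘ₗ (TensorProduct.tensorTensorTensorComm k C C D D).toLinearMap
        ∘ₗ TensorProduct.map Coalgebra.comul Coalgebra.comul
      = mul' k A ∘ₗ (TensorProduct.map (mul' k A) (mul' k A)
          ∘ₗ TensorProduct.map (TensorProduct.map f₁ f₂) (TensorProduct.map g₁ g₂)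
          ∘ₗ (TensorProduct.tensorTensorTensorComm k C C D D).toLinearMap)
        ∘ₗ TensorProduct.map Coalgebra.comul Coalgebra.comul := by
        rw [e1]; simp only [LinearMap.comp_assoc]
    _ = (mul' k A ∘ₗ TensorProduct.map (mul' k A) (mul' k A)
          ∘ₗ (TensorProduct.tensorTensorTensorComm k A A A A).toLinearMap)
        ∘ₗ TensorProduct.map (TensorProduct.map f₁ g₁) (TensorProduct.map f₂ g₂)
        ∘ₗ TensorProduct.map Coalgebra.comul Coalgebra.comul := by
        rw [e2]; simp only [LinearMap.comp_assoc]
    _ = mul' k A ∘ₗ TensorProduct.map (mul' k A) (mul' k A)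
        ∘ₗ TensorProduct.map (TensorProduct.map f₁ g₁) (TensorProduct.map f₂ g₂)
        ∘ₗ TensorProduct.map Coalgebra.comul Coalgebra.comul := by
        rw [e3]; simp only [LinearMap.comp_assoc]
    _ = mul' k A ∘ₗ TensorProduct.map (mul' k A ∘ₗ TensorProduct.map f₁ g₁ ∘ₗ Coalgebra.comul)
          (mul' k A ∘ₗ TensorProduct.map f₂ g₂ ∘ₗ Coalgebra.comul) := by
        rw [e4]

lemma mul'_map_convOne :
    mul' k A ∘ₗ TensorProduct.map (convOne k (C := C) (A := A)) (convOne k (C := D) (A := A))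
      = convOne k (C := C ⊗[k] D) (A := A) := by
  unfold _root_.convOne
  rw [counitTensor_eq]
  ext x y
  simp [Algebra.linearMap_apply, map_mul]

lemma algebraMap_comp_conv (β γ : C →ₗ[k] k) :
    conv k (Algebra.linearMap k A ∘ₗ β) (Algebra.linearMap k A ∘ₗ γ)
      = Algebra.linearMap k A ∘ₗ conv k β γ := by
  unfold conv
  have e1 : TensorProduct.map (Algebra.linearMap k A ∘ₗ β) (Algebra.linearMap k A ∘ₗ γ)
      = TensorProduct.map (Algebra.linearMap k A) (Algebra.linearMap k A)
          ∘ₗ TensorProduct.map β γ := by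
    rw [← TensorProduct.map_comp]
  have e2 : mul' k A ∘ₗ TensorProduct.map (Algebra.linearMap k A) (Algebra.linearMap k A)
      = Algebra.linearMap k A ∘ₗ mul' k k := by
    ext
    simp [Algebra.linearMap_apply, map_mul]
  rw [e1]
  simp only [← LinearMap.comp_assoc]
  rw [e2]

lemma algebraMap_comp_convOne :
    Algebra.linearMap k A ∘ₗ (convOne k (C := C) (A := k)) = convOne k (C := C) (A := A) := by
  unfold _root_.convOne
  ext x
  simp

end ConvLemmas2

section HopfLemmas

open TensorProduct LinearMap Coalgebra

variable {H : Type} [Ring H] [HopfAlgebra k H]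
variable {T : Type} [CommRing T] [HopfAlgebra k T]

lemma mul'_coalgebraMap :
    (Coalgebra.comul (R := k) (A := H)) ∘ₗ mul' k H
      = TensorProduct.map (mul' k H) (mul' k H)
          ∘ₗ (Coalgebra.comul (R := k) (A := H ⊗[k] H)) := by
  rw [comulTensor_eq]
  have e : TensorProduct.map (mul' k H) (mul' k H)
        ∘ₗ (TensorProduct.tensorTensorTensorComm k H H H H).toLinearMap
      = mul' k (H ⊗[k] H) := by
    ext a b c d
    simp [Algebra.TensorProduct.tmul_mul_tmul]
  rw [← LinearMap.comp_assoc, e]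
  ext x y
  simp [Bialgebra.comul_mul]

lemma convOne_comp_mul' :
    (convOne k (C := H) (A := T)) ∘ₗ mul' k H = convOne k (C := H ⊗[k] H) (A := T) := by
  unfold _root_.convOne
  rw [counitTensor_eq]
  ext x y
  simp [Bialgebra.counit_mul, map_mul]

namespace TakData

variable (D : TakData k H T)

lemma conv_tinvMul_tMul : conv k D.tinvMul D.tMul = convOne k := by
  show conv k (D.tinv ∘ₗ mul' k H) (D.t ∘ₗ mul' k H) = convOne k
  rw [conv_comp k D.tinv D.t (mul' k H) (mul'_coalgebraMap k), D.conv_tinv_t, convOne_comp_mul']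

lemma conv_tMul_tinvMul : conv k D.tMul D.tinvMul = convOne k := by
  show conv k (D.t ∘ₗ mul' k H) (D.tinv ∘ₗ mul' k H) = convOne k
  rw [conv_comp k D.t D.tinv (mul' k H) (mul'_coalgebraMap k), D.conv_t_tinv, convOne_comp_mul']

lemma conv_tt_tinvtinv : conv k D.tt D.tinvtinv = convOne k := by
  show conv k (mul' k T ∘ₗ TensorProduct.map D.t D.t)
      (mul' k T ∘ₗ TensorProduct.map D.tinv D.tinv) = convOne k
  rw [conv_mul_map k D.t D.tinv D.t D.tinv, D.conv_t_tinv, mul'_map_convOne]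

lemma conv_tinvtinv_tt : conv k D.tinvtinv D.tt = convOne k := by
  show conv k (mul' k T ∘ₗ TensorProduct.map D.tinv D.tinv)
      (mul' k T ∘ₗ TensorProduct.map D.t D.t) = convOne k
  rw [conv_mul_map k D.tinv D.t D.tinv D.t, D.conv_tinv_t, mul'_map_convOne]

end TakData

end HopfLemmas

/-- The map `σ⁻¹(x,y) = t_{x₁y₁}α⁻¹(x₂,y₂)t⁻¹_{x₃}t⁻¹_{y₃}` is the convolution
inverse of the generic cocycle `σ(x,y) = t_{x₁}t_{y₁}α(x₂,y₂)t⁻¹_{x₃y₃}`. -/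
theorem generic_cocycle_convInverse
    {H : Type} [Ring H] [HopfAlgebra k H]
    {T : Type} [CommRing T] [HopfAlgebra k T] (D : TakData k H T)
    (α αinv : H ⊗[k] H →ₗ[k] k)
    (hcoc : IsCocycle k α) (hinv : IsConvInverse k α αinv) :
    IsConvInverse k (D.sigma α) (D.sigmaInv αinv) := by
  obtain ⟨ha, ha'⟩ := hinv
  have h3 : conv k (Algebra.linearMap k T ∘ₗ α) (Algebra.linearMap k T ∘ₗ αinv) = convOne k := by
    rw [algebraMap_comp_conv, ha, algebraMap_comp_convOne]
  have h4 : conv k (Algebra.linearMap k T ∘ₗ αinv) (Algebra.linearMap k T ∘ₗ α) = convOne k := by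
    rw [algebraMap_comp_conv, ha', algebraMap_comp_convOne]
  unfold IsConvInverse TakData.sigma TakData.sigmaInv
  constructor
  · rw [conv_assoc k (conv k D.tt (Algebra.linearMap k T ∘ₗ α)) D.tinvMul,
      conv_assoc k D.tMul (Algebra.linearMap k T ∘ₗ αinv) D.tinvtinv,
      ← conv_assoc k D.tinvMul D.tMul, D.conv_tinvMul_tMul, convOne_conv,
      conv_assoc k D.tt (Algebra.linearMap k T ∘ₗ α),
      ← conv_assoc k (Algebra.linearMap k T ∘ₗ α) (Algebra.linearMap k T ∘ₗ αinv),
      h3, convOne_conv, D.conv_tt_tinvtinv]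
  · rw [conv_assoc k (conv k D.tMul (Algebra.linearMap k T ∘ₗ αinv)) D.tinvtinv,
      conv_assoc k D.tt (Algebra.linearMap k T ∘ₗ α) D.tinvMul,
      ← conv_assoc k D.tinvtinv D.tt, D.conv_tinvtinv_tt, convOne_conv,
      conv_assoc k D.tMul (Algebra.linearMap k T ∘ₗ αinv),
      ← conv_assoc k (Algebra.linearMap k T ∘ₗ αinv) (Algebra.linearMap k T ∘ₗ α),
      h4, convOne_conv, D.conv_tMul_tinvMul]
end
end
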